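/- For every integer D ≥ 2, there exists a finite 2-degenerate simple graph H with maximum degree at most D such that H² is not (3D−5)-degenerate; that is, some nonempty subgraph of H² has minimum degree at least 3D−4. -/

import Mathlib

open scoped Classical

/-- The square of a simple graph. -/
def square {V : Type*} (G : SimpleGraph V) : SimpleGraph V where
  Adj u v := u ≠ v ∧ (G.Adj u v ∨ ∃ w, G.Adj u w ∧ G.Adj w v)
  symm := by
    constructor
    rintro u v ⟨h1, h2⟩
    refine ⟨h1.symm, ?_⟩
    rcases h2 with h | ⟨w, hw1, hw2⟩
    · exact Or.inl h.symm
    · exact Or.inr ⟨w, hw2.symm, hw1.symm⟩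
  loopless := by constructor; rintro v ⟨h, -⟩; exact h rfl

/-- A graph is `k`-degenerate: every nonempty (induced) subgraph has a vertex of
degree at most `k`. -/
def Degenerate {V : Type*} (k : ℕ) (G : SimpleGraph V) : Prop :=
  ∀ A : Finset V, A.Nonempty → ∃ v ∈ A, (A.filter (fun w => G.Adj v w)).card ≤ k

open Finset

namespace SqC
variable (D : ℕ)
abbrev Vt := (Bool × Bool × ZMod D) ⊕ ((Bool × ZMod D × ZMod D) ⊕ (ZMod D × ZMod D × Fin (D - 2)))
def hub (c s : Bool) (x : ZMod D) : Vt D := Sum.inl (c, s, x)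
def mid (c : Bool) (i j : ZMod D) : Vt D := Sum.inr (Sum.inl (c, i, j))
def con (i j : ZMod D) (k : Fin (D - 2)) : Vt D := Sum.inr (Sum.inr (i, j, k))
def rel : Vt D → Vt D → Prop
  | Sum.inl (c, s, x), Sum.inr (Sum.inl (c', i, j)) =>
      c = c' ∧ ((s = false ∧ x = i) ∨ (s = true ∧ x = j))
  | Sum.inr (Sum.inr (i, j, k)), Sum.inr (Sum.inl (c, i', j')) =>
      i = i' ∧ ((c = false ∧ j' = j) ∨ (c = true ∧ j' = j + (k.val : ZMod D)))
  | _, _ => False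
def HG : SimpleGraph (Vt D) := SimpleGraph.fromRel (rel D)
lemma adj_hub_mid {c s c' : Bool} {x i j : ZMod D} :
    (HG D).Adj (hub D c s x) (mid D c' i j) ↔
      (c = c' ∧ ((s = false ∧ x = i) ∨ (s = true ∧ x = j))) := by
  simp [HG, SimpleGraph.fromRel_adj, hub, mid, rel]
lemma adj_con_mid {i j : ZMod D} {k : Fin (D-2)} {c : Bool} {i' j' : ZMod D} :
    (HG D).Adj (con D i j k) (mid D c i' j') ↔
      (i = i' ∧ ((c = false ∧ j' = j) ∨ (c = true ∧ j' = j + (k.val : ZMod D)))) := by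
  simp [HG, SimpleGraph.fromRel_adj, con, mid, rel]
lemma not_adj_mid_mid {c c' : Bool} {i j i' j' : ZMod D} :
    ¬ (HG D).Adj (mid D c i j) (mid D c' i' j') := by
  simp [HG, SimpleGraph.fromRel_adj, mid, rel]
lemma not_adj_hub_hub {c s c' s' : Bool} {x x' : ZMod D} :
    ¬ (HG D).Adj (hub D c s x) (hub D c' s' x') := by
  simp [HG, SimpleGraph.fromRel_adj, hub, rel]
lemma not_adj_hub_con {c s : Bool} {x i j : ZMod D} {k : Fin (D-2)} :
    ¬ (HG D).Adj (hub D c s x) (con D i j k) := by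
  simp [HG, SimpleGraph.fromRel_adj, hub, con, rel]
lemma not_adj_con_con {i j i' j' : ZMod D} {k k' : Fin (D-2)} :
    ¬ (HG D).Adj (con D i j k) (con D i' j' k') := by
  simp [HG, SimpleGraph.fromRel_adj, con, rel]

/-- 2-degeneracy. -/
lemma degen : Degenerate 2 (HG D) := by
  intro A hA
  by_cases hc : ∃ x ∈ A, ∃ i j k, x = con D i j k
  · obtain ⟨x, hxA, i, j, k, rfl⟩ := hc
    refine ⟨_, hxA, ?_⟩
    have hsub : A.filter (fun w => (HG D).Adj (con D i j k) w) ⊆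
        {mid D false i j, mid D true i (j + (k.val : ZMod D))} := by
      intro w hw
      rw [mem_filter] at hw
      obtain ⟨-, hadj⟩ := hw
      rcases w with ⟨c', s', x'⟩ | ⟨⟨c', i', j'⟩ | ⟨i', j', k'⟩⟩
      · exact absurd hadj ((HG D).adj_symm · |> (not_adj_hub_con D))
      · rw [show (Sum.inr (Sum.inl (c', i', j')) : Vt D) = mid D c' i' j' from rfl,
          adj_con_mid] at hadj
        obtain ⟨rfl, (⟨rfl, rfl⟩ | ⟨rfl, rfl⟩)⟩ := hadj
        · simp [mid, hub]
        · simp [mid, hub]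
      · exact absurd hadj (not_adj_con_con D)
    calc (A.filter (fun w => (HG D).Adj (con D i j k) w)).card
        ≤ ({mid D false i j, mid D true i (j + (k.val : ZMod D))} : Finset (Vt D)).card :=
          card_le_card hsub
      _ ≤ 2 := (card_insert_le _ _).trans (by simp)
  · by_cases hm : ∃ x ∈ A, ∃ c i j, x = mid D c i j
    · obtain ⟨x, hxA, c, i, j, rfl⟩ := hm
      refine ⟨_, hxA, ?_⟩
      have hsub : A.filter (fun w => (HG D).Adj (mid D c i j) w) ⊆
          {hub D c false i, hub D c true j} := by
        intro w hw
        rw [mem_filter] at hw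
        obtain ⟨hwA, hadj⟩ := hw
        rcases w with ⟨c', s', x'⟩ | ⟨⟨c', i', j'⟩ | ⟨i', j', k'⟩⟩
        · have : (HG D).Adj (hub D c' s' x') (mid D c i j) := hadj.symm
          rw [adj_hub_mid] at this
          obtain ⟨rfl, (⟨rfl, rfl⟩ | ⟨rfl, rfl⟩)⟩ := this
          · simp [mid, hub]
          · simp [mid, hub]
        · exact absurd hadj (not_adj_mid_mid D)
        · exact absurd (hc ⟨_, hwA, i', j', k', rfl⟩) not_false
      calc (A.filter (fun w => (HG D).Adj (mid D c i j) w)).card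
          ≤ ({hub D c false i, hub D c true j} : Finset (Vt D)).card := card_le_card hsub
        _ ≤ 2 := (card_insert_le _ _).trans (by simp)
    · obtain ⟨x, hxA⟩ := hA
      refine ⟨x, hxA, ?_⟩
      have hsub : A.filter (fun w => (HG D).Adj x w) ⊆ ∅ := by
        intro w hw
        rw [mem_filter] at hw
        obtain ⟨hwA, hadj⟩ := hw
        exfalso
        rcases x with ⟨c, s, y⟩ | ⟨⟨c, i, j⟩ | ⟨i, j, k⟩⟩
        · rcases w with ⟨c', s', x'⟩ | ⟨⟨c', i', j'⟩ | ⟨i', j', k'⟩⟩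
          · exact not_adj_hub_hub D hadj
          · exact hm ⟨_, hwA, c', i', j', rfl⟩
          · exact not_adj_hub_con D hadj
        · exact hm ⟨_, hxA, c, i, j, rfl⟩
        · exact hc ⟨_, hxA, i, j, k, rfl⟩
      simpa using (card_le_card hsub).trans (by simp)

section Deg
variable [NeZero D]

lemma deg_hub (c s : Bool) (x : ZMod D) :
    (univ.filter (fun w => (HG D).Adj (hub D c s x) w)).card ≤ D := by
  have hsub : univ.filter (fun w => (HG D).Adj (hub D c s x) w) ⊆
      univ.image (fun y : ZMod D => if s then mid D c y x else mid D c x y) := by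
    intro w hw
    rw [mem_filter] at hw
    obtain ⟨-, hadj⟩ := hw
    rcases w with ⟨c', s', x'⟩ | ⟨⟨c', i', j'⟩ | ⟨i', j', k'⟩⟩
    · exact absurd hadj (not_adj_hub_hub D)
    · rw [show (Sum.inr (Sum.inl (c', i', j')) : Vt D) = mid D c' i' j' from rfl,
        adj_hub_mid] at hadj
      obtain ⟨rfl, (⟨rfl, rfl⟩ | ⟨rfl, rfl⟩)⟩ := hadj
      · exact mem_image.2 ⟨j', mem_univ _, by simp [mid]⟩
      · exact mem_image.2 ⟨i', mem_univ _, by simp [mid]⟩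
    · exact absurd hadj (not_adj_hub_con D)
  calc (univ.filter (fun w => (HG D).Adj (hub D c s x) w)).card
      ≤ _ := card_le_card hsub
    _ ≤ (univ : Finset (ZMod D)).card := card_image_le
    _ = D := by simp [ZMod.card]

lemma deg_con (hD : 2 ≤ D) (i j : ZMod D) (k : Fin (D - 2)) :
    (univ.filter (fun w => (HG D).Adj (con D i j k) w)).card ≤ D := by
  have hsub : univ.filter (fun w => (HG D).Adj (con D i j k) w) ⊆
      {mid D false i j, mid D true i (j + (k.val : ZMod D))} := by
    intro w hw
    rw [mem_filter] at hw
    obtain ⟨-, hadj⟩ := hw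
    rcases w with ⟨c', s', x'⟩ | ⟨⟨c', i', j'⟩ | ⟨i', j', k'⟩⟩
    · exact absurd hadj ((HG D).adj_symm · |> (not_adj_hub_con D))
    · rw [show (Sum.inr (Sum.inl (c', i', j')) : Vt D) = mid D c' i' j' from rfl,
        adj_con_mid] at hadj
      obtain ⟨rfl, (⟨rfl, rfl⟩ | ⟨rfl, rfl⟩)⟩ := hadj
      · simp [mid]
      · simp [mid]
    · exact absurd hadj (not_adj_con_con D)
  calc (univ.filter (fun w => (HG D).Adj (con D i j k) w)).card
      ≤ _ := card_le_card hsub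
    _ ≤ 2 := (card_insert_le _ _).trans (by simp)
    _ ≤ D := hD

lemma deg_mid (hD : 2 ≤ D) (c : Bool) (i j : ZMod D) :
    (univ.filter (fun w => (HG D).Adj (mid D c i j) w)).card ≤ D := by
  have hsub : univ.filter (fun w => (HG D).Adj (mid D c i j) w) ⊆
      insert (hub D c false i) (insert (hub D c true j)
        (univ.image (fun k : Fin (D - 2) =>
          con D i (if c then j - (k.val : ZMod D) else j) k))) := by
    intro w hw
    rw [mem_filter] at hw
    obtain ⟨-, hadj⟩ := hw
    rcases w with ⟨c', s', x'⟩ | ⟨⟨c', i', j'⟩ | ⟨i', j', k'⟩⟩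
    · have : (HG D).Adj (hub D c' s' x') (mid D c i j) := hadj.symm
      rw [adj_hub_mid] at this
      obtain ⟨rfl, (⟨rfl, rfl⟩ | ⟨rfl, rfl⟩)⟩ := this
      · simp [hub]
      · simp [hub]
    · exact absurd hadj (not_adj_mid_mid D)
    · have : (HG D).Adj (con D i' j' k') (mid D c i j) := hadj.symm
      rw [adj_con_mid] at this
      obtain ⟨rfl, (⟨rfl, rfl⟩ | ⟨rfl, h⟩)⟩ := this
      · refine mem_insert_of_mem (mem_insert_of_mem (mem_image.2 ⟨k', mem_univ _, ?_⟩))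
        simp [con]
      · refine mem_insert_of_mem (mem_insert_of_mem (mem_image.2 ⟨k', mem_univ _, ?_⟩))
        subst h
        simp [con]
  calc (univ.filter (fun w => (HG D).Adj (mid D c i j) w)).card
      ≤ _ := card_le_card hsub
    _ ≤ (D - 2) + 1 + 1 := by
        refine (card_insert_le _ _).trans (Nat.add_le_add_right ?_ 1)
        refine (card_insert_le _ _).trans (Nat.add_le_add_right ?_ 1)
        exact card_image_le.trans (by simp)
    _ ≤ D := by omega

lemma deg_all (hD : 2 ≤ D) (v : Vt D) :
    (univ.filter (fun w => (HG D).Adj v w)).card ≤ D := by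
  rcases v with ⟨c, s, x⟩ | ⟨⟨c, i, j⟩ | ⟨i, j, k⟩⟩
  · exact deg_hub D c s x
  · exact deg_mid D hD c i j
  · exact deg_con D hD i j k

end Deg

lemma adj_hubrow (c : Bool) (i j : ZMod D) : (HG D).Adj (hub D c false i) (mid D c i j) :=
  (adj_hub_mid D).2 ⟨rfl, Or.inl ⟨rfl, rfl⟩⟩

lemma adj_hubcol (c : Bool) (i j : ZMod D) : (HG D).Adj (hub D c true j) (mid D c i j) :=
  (adj_hub_mid D).2 ⟨rfl, Or.inr ⟨rfl, rfl⟩⟩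

lemma adj_con_left (i j : ZMod D) (k : Fin (D-2)) :
    (HG D).Adj (con D i j k) (mid D false i j) :=
  (adj_con_mid D).2 ⟨rfl, Or.inl ⟨rfl, rfl⟩⟩

lemma adj_con_right (i j : ZMod D) (k : Fin (D-2)) :
    (HG D).Adj (con D i j k) (mid D true i (j + (k.val : ZMod D))) :=
  (adj_con_mid D).2 ⟨rfl, Or.inr ⟨rfl, rfl⟩⟩

section Sq
variable [NeZero D]

noncomputable def A0 : Finset (Vt D) :=
  univ.image (fun p : Bool × ZMod D × ZMod D => mid D p.1 p.2.1 p.2.2)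

lemma mem_A0 (c : Bool) (i j : ZMod D) : mid D c i j ∈ A0 D :=
  mem_image.2 ⟨(c, i, j), mem_univ _, rfl⟩

lemma A0_nonempty : (A0 D).Nonempty := ⟨mid D false 0 0, mem_A0 D false 0 0⟩

lemma sq_bound (hD : 2 ≤ D) (c : Bool) (i j : ZMod D) :
    3 * D - 4 ≤ ((A0 D).filter (fun w => (square (HG D)).Adj (mid D c i j) w)).card := by
  classical
  set F := (A0 D).filter (fun w => (square (HG D)).Adj (mid D c i j) w) with hF
  set S1 : Finset (Vt D) := (univ.erase j).image (fun j' => mid D c i j') with hS1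
  set S2 : Finset (Vt D) := (univ.erase i).image (fun i' => mid D c i' j) with hS2
  set S3 : Finset (Vt D) := univ.image (fun k : Fin (D-2) =>
      mid D (!c) i (if c then j - (k.val : ZMod D) else j + (k.val : ZMod D))) with hS3
  have hS1F : S1 ⊆ F := by
    intro w hw
    obtain ⟨j', hj', rfl⟩ := mem_image.1 hw
    rw [mem_erase] at hj'
    refine mem_filter.2 ⟨mem_A0 D c i j', ?_, Or.inr
      ⟨hub D c false i, (adj_hubrow D c i j).symm, adj_hubrow D c i j'⟩⟩
    simp only [mid, ne_eq, Sum.inr.injEq, Sum.inl.injEq, Prod.mk.injEq]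
    exact fun h => hj'.1 (h.2.2).symm
  have hS2F : S2 ⊆ F := by
    intro w hw
    obtain ⟨i', hi', rfl⟩ := mem_image.1 hw
    rw [mem_erase] at hi'
    refine mem_filter.2 ⟨mem_A0 D c i' j, ?_, Or.inr
      ⟨hub D c true j, (adj_hubcol D c i j).symm, adj_hubcol D c i' j⟩⟩
    simp only [mid, ne_eq, Sum.inr.injEq, Sum.inl.injEq, Prod.mk.injEq]
    exact fun h => hi'.1 (h.2.1).symm
  have hS3F : S3 ⊆ F := by
    intro w hw
    obtain ⟨k, -, rfl⟩ := mem_image.1 hw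
    cases c
    · simp only [Bool.not_false, if_neg (by simp : ¬ (false = true))]
      refine mem_filter.2 ⟨mem_A0 D true i _, ?_, Or.inr
        ⟨con D i j k, (adj_con_left D i j k).symm, adj_con_right D i j k⟩⟩
      simp [mid]
    · simp only [Bool.not_true, if_pos rfl]
      have hsum : (j - (k.val : ZMod D)) + (k.val : ZMod D) = j := by ring
      refine mem_filter.2 ⟨mem_A0 D false i _, ?_, Or.inr
        ⟨con D i (j - (k.val : ZMod D)) k, ?_, adj_con_left D i _ k⟩⟩
      · simp [mid]
      · have h2 := adj_con_right D i (j - (k.val : ZMod D)) k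
        rw [hsum] at h2
        exact h2.symm
  have c1 : S1.card = D - 1 := by
    rw [hS1, card_image_of_injective _ (fun a b h => by simpa [mid] using h),
      card_erase_of_mem (mem_univ _), card_univ, ZMod.card]
  have c2 : S2.card = D - 1 := by
    rw [hS2, card_image_of_injective _ (fun a b h => by simpa [mid] using h),
      card_erase_of_mem (mem_univ _), card_univ, ZMod.card]
  have hvalinj : ∀ a b : Fin (D-2), (a.val : ZMod D) = (b.val : ZMod D) → a = b := by
    intro a b h
    have ha : a.val < D := lt_of_lt_of_le a.isLt (Nat.sub_le D 2)
    have hb : b.val < D := lt_of_lt_of_le b.isLt (Nat.sub_le D 2)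
    have := congrArg ZMod.val h
    rw [ZMod.val_cast_of_lt ha, ZMod.val_cast_of_lt hb] at this
    exact Fin.ext this
  have c3 : S3.card = D - 2 := by
    rw [hS3, card_image_of_injective _ ?_, card_univ, Fintype.card_fin]
    intro a b h
    simp only [mid, Sum.inr.injEq, Sum.inl.injEq, Prod.mk.injEq] at h
    have h3 := h.2.2
    cases c
    · simp only [if_neg (by simp : ¬ (false = true))] at h3
      exact hvalinj a b (add_left_cancel h3)
    · simp only [if_pos rfl] at h3
      exact hvalinj a b (sub_right_inj.1 h3)
  have d12 : Disjoint S1 S2 := by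
    rw [disjoint_left]
    rintro w hw1 hw2
    obtain ⟨j', hj', rfl⟩ := mem_image.1 hw1
    obtain ⟨i', hi', he⟩ := mem_image.1 hw2
    rw [mem_erase] at hj' hi'
    simp only [mid, Sum.inr.injEq, Sum.inl.injEq, Prod.mk.injEq] at he
    exact hj'.1 he.2.2.symm
  have d3 : Disjoint (S1 ∪ S2) S3 := by
    rw [disjoint_right]
    rintro w hw3 hw12
    obtain ⟨k, -, rfl⟩ := mem_image.1 hw3
    rcases mem_union.1 hw12 with h | h
    · obtain ⟨j', -, he⟩ := mem_image.1 h
      simp only [mid, Sum.inr.injEq, Sum.inl.injEq, Prod.mk.injEq] at he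
      cases c <;> exact absurd he.1 (by decide)
    · obtain ⟨i', -, he⟩ := mem_image.1 h
      simp only [mid, Sum.inr.injEq, Sum.inl.injEq, Prod.mk.injEq] at he
      cases c <;> exact absurd he.1 (by decide)
  calc 3 * D - 4 = (D - 1) + (D - 1) + (D - 2) := by omega
    _ = ((S1 ∪ S2) ∪ S3).card := by
        rw [card_union_of_disjoint d3, card_union_of_disjoint d12, c1, c2, c3]
    _ ≤ F.card := card_le_card (union_subset (union_subset hS1F hS2F) hS3F)

end Sq

end SqC

open SqC in
/-- For every integer `D ≥ 2`, there exists a finite 2-degenerate simple graph `H`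
with maximum degree at most `D` such that `H²` is not `(3D−5)`-degenerate: some
nonempty (induced) subgraph of `H²` has minimum degree at least `3D−4`. -/
theorem square_not_degenerate_construction (D : ℕ) (hD : 2 ≤ D) :
    ∃ (n : ℕ) (H : SimpleGraph (Fin n)),
      Degenerate 2 H ∧
      (∀ v : Fin n, (Finset.univ.filter (fun w => H.Adj v w)).card ≤ D) ∧
      ∃ A : Finset (Fin n), A.Nonempty ∧
        ∀ v ∈ A, 3 * D - 4 ≤ (A.filter (fun w => (square H).Adj v w)).card := by
  classical
  haveI : NeZero D := ⟨by omega⟩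
  refine ⟨Fintype.card (Vt D),
    SimpleGraph.comap (⇑(Fintype.equivFin (Vt D)).symm) (HG D), ?_, ?_, ?_⟩
  all_goals set e : Vt D ≃ Fin (Fintype.card (Vt D)) := Fintype.equivFin (Vt D) with he
  · -- degeneracy
    intro B hB
    obtain ⟨v, hv, hcard⟩ := degen D (B.image (⇑e.symm)) (hB.image _)
    obtain ⟨b, hb, rfl⟩ := mem_image.1 hv
    refine ⟨b, hb, ?_⟩
    have hEq : B.filter (fun w => (SimpleGraph.comap (⇑e.symm) (HG D)).Adj b w)
        = B.filter (fun w => (HG D).Adj (e.symm b) (e.symm w)) := rfl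
    erw [hEq]
    have himg : (B.image (⇑e.symm)).filter (fun a => (HG D).Adj (e.symm b) a)
        = (B.filter (fun w => (HG D).Adj (e.symm b) (e.symm w))).image (⇑e.symm) :=
      filter_image
    rw [himg, card_image_of_injective _ e.symm.injective] at hcard
    exact hcard
  · -- degree bound
    intro v
    have h1 : (univ : Finset (Fin (Fintype.card (Vt D))))
        = (univ : Finset (Vt D)).image (⇑e) := (Finset.image_univ_equiv e).symm
    rw [h1, filter_image, card_image_of_injective _ e.injective]
    have h2 : (univ.filter (fun a : Vt D =>
        (SimpleGraph.comap (⇑e.symm) (HG D)).Adj v (e a)))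
        = univ.filter (fun a => (HG D).Adj (e.symm v) a) := by
      apply filter_congr
      intro a _
      simp [SimpleGraph.comap_adj]
    erw [h2]
    exact deg_all D hD (e.symm v)
  · -- the dense set in the square
    have hsq : ∀ a b : Vt D,
        (square (SimpleGraph.comap (⇑e.symm) (HG D))).Adj (e a) (e b)
          ↔ (square (HG D)).Adj a b := by
      intro a b
      constructor
      · rintro ⟨hne, h⟩
        refine ⟨fun hh => hne (congrArg e hh), ?_⟩
        rcases h with h | ⟨w, h1, h2⟩
        · left; simpa using h
        · right
          exact ⟨e.symm w, by simpa using h1, by simpa using h2⟩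
      · rintro ⟨hne, h⟩
        refine ⟨fun hh => hne (by simpa using congrArg (⇑e.symm) hh), ?_⟩
        rcases h with h | ⟨w, h1, h2⟩
        · left; simpa using h
        · right
          refine ⟨e w, ?_, ?_⟩
          · show (HG D).Adj (e.symm (e a)) (e.symm (e w)); simpa using h1
          · show (HG D).Adj (e.symm (e w)) (e.symm (e b)); simpa using h2
    refine ⟨(A0 D).image (⇑e), (A0_nonempty D).image _, ?_⟩
    intro v' hv'
    obtain ⟨v, hv, rfl⟩ := mem_image.1 hv'
    obtain ⟨⟨c, i, j⟩, -, rfl⟩ := mem_image.1 hv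
    rw [filter_image, card_image_of_injective _ e.injective]
    have h3 : ((A0 D).filter (fun a =>
        (square (SimpleGraph.comap (⇑e.symm) (HG D))).Adj (e (mid D c i j)) (e a)))
        = (A0 D).filter (fun a => (square (HG D)).Adj (mid D c i j) a) := by
      apply filter_congr
      intro a _
      simpa using hsq (mid D c i j) a
    rw [h3]
    exact sq_bound D hD c i j
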